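/- Let g : 𝒴 → ℝ^d be any measurable estimator and let ε = g(Y) − X denote the estimation error. Then for every a ∈ ℝ^d and every integer M ≥ 2, E[⟨a, ε⟩²] ≥ ∫_0^∞ (t/2) V_t{ h(t,a,M)/(M−1) } dt, where for t > 0, h(t,a,M) = sup over tuples U = (u_0,…,u_{M−1}) in ℝ^d satisfying ⟨a, u_k⟩ = kt for all k ∈ [0:M−1] of ∫ P_e(x; 𝒫_U(x), U) dμ_U(x). -/

import Mathlib

open MeasureTheory ProbabilityTheory ENNReal

noncomputable section

variable {d : ℕ} {𝒴 : Type*} [MeasurableSpace 𝒴]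

/-- Law of `X - u` when `X ∼ P`. -/
def shiftLaw (P : Measure (Fin d → ℝ)) (u : Fin d → ℝ) : Measure (Fin d → ℝ) :=
  P.map (· - u)

/-- The mixture measure `μ_U = ∑_k P_{X-u_k}`. -/
def mixMeasure (P : Measure (Fin d → ℝ)) {M : ℕ} (U : Fin M → Fin d → ℝ) :
    Measure (Fin d → ℝ) :=
  ∑ k : Fin M, shiftLaw P (U k)

/-- The prior `p_i(x) = dP_{X-u_i}/dμ_U (x)`. -/
def prior (P : Measure (Fin d → ℝ)) {M : ℕ} (U : Fin M → Fin d → ℝ) (i : Fin M)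
    (x : Fin d → ℝ) : ℝ≥0∞ :=
  (shiftLaw P (U i)).rnDeriv (mixMeasure P U) x

/-- Minimum Bayes error probability of the `M`-ary hypothesis test where hypothesis `i`
has prior `p_i(x)` and observation law `κ(·|x+u_i)`. -/
def bayesError (P : Measure (Fin d → ℝ)) (κ : Kernel (Fin d → ℝ) 𝒴) {M : ℕ}
    (U : Fin M → Fin d → ℝ) (x : Fin d → ℝ) : ℝ≥0∞ :=
  ⨅ (φ : 𝒴 → Fin M) (_ : Measurable φ),
    ∑ i : Fin M, prior P U i x * κ (x + U i) {y | φ y ≠ i}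

/-- `h(t,a,M)`: supremum over tuples `U` with `⟨a, u_k⟩ = kt` of `∫ P_e dμ_U`. -/
def hFunA (P : Measure (Fin d → ℝ)) (κ : Kernel (Fin d → ℝ) 𝒴) (M : ℕ) (t : ℝ)
    (a : Fin d → ℝ) : ℝ≥0∞ :=
  ⨆ (U : Fin M → Fin d → ℝ) (_ : ∀ k : Fin M, (∑ j, a j * U k j) = (k : ℝ) * t),
    ∫⁻ x, bayesError P κ U x ∂(mixMeasure P U)

lemma ZZ.decision_cases {M : ℕ} (hM : 2 ≤ M) {u : ℝ} (hu : 0 < u) (s : ℝ) (i : Fin M)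
    (h : min (⌊s / u + 1/2⌋.toNat) (M - 1) ≠ (i : ℕ)) :
    ((i : ℕ) < M - 1 ∧ (i : ℝ) * u + u / 2 ≤ s) ∨ (0 < (i : ℕ) ∧ s ≤ (i : ℝ) * u - u / 2) := by
  set n : ℤ := ⌊s / u + 1/2⌋ with hn
  have h1 : (n : ℝ) ≤ s / u + 1/2 := Int.floor_le _
  have h2 : s / u + 1/2 < n + 1 := Int.lt_floor_add_one _
  have hr1 : ((n : ℝ) - 1/2) * u ≤ s := (le_div_iff₀ hu).mp (by linarith)
  have hr2 : s < ((n : ℝ) + 1/2) * u := (div_lt_iff₀ hu).mp (by linarith)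
  have hiM : (i : ℕ) < M := i.isLt
  rcases lt_trichotomy (min n.toNat (M-1)) (i : ℕ) with hlt | heq | hgt
  · right
    refine ⟨by omega, ?_⟩
    have hj : min n.toNat (M-1) = n.toNat := by omega
    have hle : n ≤ (i : ℤ) - 1 := by omega
    have hleR : (n : ℝ) ≤ (i : ℝ) - 1 := by exact_mod_cast hle
    nlinarith
  · exact absurd heq h
  · left
    refine ⟨by omega, ?_⟩
    have hge : (i : ℤ) + 1 ≤ n := by omega
    have hgeR : (i : ℝ) + 1 ≤ (n : ℝ) := by exact_mod_cast hge
    nlinarith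

lemma ZZ.lint_Ioc {b : ℝ} (hb : 0 ≤ b) :
    ∫⁻ t in Set.Ioc (0:ℝ) b, ENNReal.ofReal (t/2) = ENNReal.ofReal (b^2/4) := by
  rw [← ofReal_integral_eq_lintegral_ofReal]
  · congr 1
    rw [← intervalIntegral.integral_of_le hb, intervalIntegral.integral_div, integral_id]
    ring
  · exact (continuous_id.div_const 2).integrableOn_Ioc
  · filter_upwards [ae_restrict_mem measurableSet_Ioc] with t ht
    have := ht.1; positivity

lemma ZZ.card_filter_lt {M : ℕ} (hM : 2 ≤ M) :
    (Finset.univ.filter (fun i : Fin M => (i : ℕ) < M - 1)).card = M - 1 := by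
  have he : (Finset.univ.filter (fun i : Fin M => (i : ℕ) < M - 1))
      = Finset.univ.erase (⟨M - 1, by omega⟩ : Fin M) := by
    ext i
    simp only [Finset.mem_filter, Finset.mem_univ, true_and, Finset.mem_erase, and_true,
      ne_eq, Fin.ext_iff]
    have := i.isLt
    omega
  rw [he, Finset.card_erase_of_mem (Finset.mem_univ _), Finset.card_univ, Fintype.card_fin]

lemma ZZ.card_filter_pos {M : ℕ} (hM : 2 ≤ M) :
    (Finset.univ.filter (fun i : Fin M => 0 < (i : ℕ))).card = M - 1 := by
  have he : (Finset.univ.filter (fun i : Fin M => 0 < (i : ℕ)))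
      = Finset.univ.erase (⟨0, by omega⟩ : Fin M) := by
    ext i
    simp only [Finset.mem_filter, Finset.mem_univ, true_and, Finset.mem_erase, and_true,
      ne_eq, Fin.ext_iff]
    omega
  rw [he, Finset.card_erase_of_mem (Finset.mem_univ _), Finset.card_univ, Fintype.card_fin]

lemma ZZ.sum_ite_const {M : ℕ} (p : Fin M → Prop) [DecidablePred p] (c : ℝ≥0∞) :
    ∑ i : Fin M, (if p i then c else 0) = (Finset.univ.filter p).card * c := by
  rw [← Finset.sum_filter, Finset.sum_const, nsmul_eq_mul]

lemma ZZ.shift_prob (P : Measure (Fin d → ℝ)) [IsProbabilityMeasure P] (v : Fin d → ℝ) :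
    IsProbabilityMeasure (shiftLaw P v) := by
  rw [shiftLaw]
  exact Measure.isProbabilityMeasure_map (measurable_id'.sub_const _).aemeasurable

lemma ZZ.layercake {Ω : Type*} [MeasurableSpace Ω] (ν : Measure Ω) [IsFiniteMeasure ν]
    {Z : Ω → ℝ} (hZ : Measurable Z) :
    ∫⁻ t in Set.Ioi (0:ℝ), ENNReal.ofReal (t/2) * ν {p | t ≤ 2 * |Z p|}
      = ∫⁻ p, ENNReal.ofReal (Z p ^ 2) ∂ν := by
  classical
  set S : Set (ℝ × Ω) := {q | q.1 ≤ 2 * |Z q.2|} with hSdef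
  have hS : MeasurableSet S :=
    measurableSet_le measurable_fst (((hZ.comp measurable_snd).abs).const_mul 2)
  set F : ℝ → Ω → ℝ≥0∞ := fun t p =>
    ENNReal.ofReal (t/2) * S.indicator (fun _ => (1:ℝ≥0∞)) (t, p) with hFdef
  have hFm : Measurable (Function.uncurry F) := by
    apply Measurable.mul
    · exact (measurable_fst.div_const 2).ennreal_ofReal
    · exact (measurable_const.indicator hS).comp measurable_id
  have hstep1 : ∀ t : ℝ, ENNReal.ofReal (t/2) * ν {p | t ≤ 2 * |Z p|}
      = ∫⁻ p, F t p ∂ν := by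
    intro t
    have hset : MeasurableSet (Prod.mk t ⁻¹' S) := measurable_prodMk_left hS
    have h1 : ∀ p, F t p
        = ENNReal.ofReal (t/2) * (Prod.mk t ⁻¹' S).indicator (fun _ => (1:ℝ≥0∞)) p := by
      intro p
      simp only [hFdef, Set.indicator_apply, Set.mem_preimage]
    simp_rw [h1]
    rw [lintegral_const_mul _ (measurable_const.indicator hset),
      lintegral_indicator_const hset, one_mul]
    rfl
  have hswap : ∫⁻ t in Set.Ioi (0:ℝ), ∫⁻ p, F t p ∂ν
      = ∫⁻ p, (∫⁻ t in Set.Ioi (0:ℝ), F t p) ∂ν :=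
    lintegral_lintegral_swap hFm.aemeasurable
  have hinner : ∀ p : Ω, ∫⁻ t in Set.Ioi (0:ℝ), F t p = ENNReal.ofReal (Z p ^ 2) := by
    intro p
    have h1 : ∀ t : ℝ, F t p
        = (Set.Iic (2 * |Z p|)).indicator (fun t => ENNReal.ofReal (t/2)) t := by
      intro t
      simp only [hFdef, Set.indicator_apply, hSdef, Set.mem_setOf_eq, Set.mem_Iic]
      split_ifs <;> simp
    simp_rw [h1]
    rw [lintegral_indicator measurableSet_Iic, Measure.restrict_restrict measurableSet_Iic]
    have h2 : Set.Iic (2 * |Z p|) ∩ Set.Ioi 0 = Set.Ioc 0 (2 * |Z p|) := by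
      ext t
      simp only [Set.mem_inter_iff, Set.mem_Iic, Set.mem_Ioi, Set.mem_Ioc]
      tauto
    rw [h2, ZZ.lint_Ioc (by positivity)]
    congr 1
    rw [mul_pow, sq_abs]
    ring
  calc ∫⁻ t in Set.Ioi (0:ℝ), ENNReal.ofReal (t/2) * ν {p | t ≤ 2 * |Z p|}
      = ∫⁻ t in Set.Ioi (0:ℝ), ∫⁻ p, F t p ∂ν := by simp_rw [hstep1]
    _ = ∫⁻ p, (∫⁻ t in Set.Ioi (0:ℝ), F t p) ∂ν := hswap
    _ = ∫⁻ p, ENNReal.ofReal (Z p ^ 2) ∂ν := by simp_rw [hinner]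

lemma ZZ.core_bound (P : Measure (Fin d → ℝ)) [IsProbabilityMeasure P]
    (κ : Kernel (Fin d → ℝ) 𝒴) [IsMarkovKernel κ]
    {g : 𝒴 → Fin d → ℝ} (hg : Measurable g) (a : Fin d → ℝ) {M : ℕ} (hM : 2 ≤ M)
    {u : ℝ} (hu : 0 < u) (U : Fin M → Fin d → ℝ)
    (hU : ∀ k : Fin M, (∑ j, a j * U k j) = (k : ℝ) * u) :
    ∫⁻ x, bayesError P κ U x ∂(mixMeasure P U)
      ≤ ((M : ℝ≥0∞) - 1) *
        (P.compProd κ) {p | u ≤ 2 * |∑ j, a j * (g p.2 j - p.1 j)|} := by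
  classical
  have hMpos : 0 < M := by omega
  set ν := P.compProd κ with hν
  set r : 𝒴 → ℝ := fun y => ∑ j, a j * g y j with hrdef
  set c : (Fin d → ℝ) → ℝ := fun x => ∑ j, a j * x j with hcdef
  have hr : Measurable r := Finset.measurable_sum _ fun j _ =>
    ((measurable_pi_apply j).comp hg).const_mul (a j)
  have hc : Measurable c := Finset.measurable_sum _ fun j _ =>
    by fun_prop
  -- the sub-optimal decision rule
  set φ : (Fin d → ℝ) → 𝒴 → Fin M := fun x y =>
    ⟨min (⌊(r y - c x) / u + 1/2⌋.toNat) (M - 1), by omega⟩ with hφdef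
  have hφm : ∀ x, Measurable (φ x) := fun x =>
    (measurable_of_countable (fun n : ℤ => (⟨min n.toNat (M - 1), by omega⟩ : Fin M))).comp
      (((hr.sub measurable_const).div_const u).add_const (1/2 : ℝ)).floor
  -- error sets
  set Tp : Fin M → Set ((Fin d → ℝ) × 𝒴) := fun i =>
    {q | (i : ℝ) * u + u / 2 ≤ r q.2 - c q.1} with hTpdef
  set Tm : Fin M → Set ((Fin d → ℝ) × 𝒴) := fun i =>
    {q | r q.2 - c q.1 ≤ (i : ℝ) * u - u / 2} with hTmdef
  have hrc : Measurable fun q : (Fin d → ℝ) × 𝒴 => r q.2 - c q.1 :=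
    (hr.comp measurable_snd).sub (hc.comp measurable_fst)
  have hTpm : ∀ i, MeasurableSet (Tp i) := fun i => measurableSet_le measurable_const hrc
  have hTmm : ∀ i, MeasurableSet (Tm i) := fun i => measurableSet_le hrc measurable_const
  have haddm : ∀ i : Fin M, Measurable (fun x : Fin d → ℝ => x + U i) := fun i =>
    measurable_id.add_const _
  set fp : Fin M → (Fin d → ℝ) → ℝ≥0∞ := fun i x => κ (x + U i) (Prod.mk x ⁻¹' Tp i) with hfp
  set fm : Fin M → (Fin d → ℝ) → ℝ≥0∞ := fun i x => κ (x + U i) (Prod.mk x ⁻¹' Tm i) with hfm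
  have hfpm : ∀ i, Measurable (fp i) := by
    intro i
    have h1 := Kernel.measurable_kernel_prodMk_left (κ := κ.comap (· + U i) (haddm i)) (hTpm i)
    simpa [Kernel.comap_apply] using h1
  have hfmm : ∀ i, Measurable (fm i) := by
    intro i
    have h1 := Kernel.measurable_kernel_prodMk_left (κ := κ.comap (· + U i) (haddm i)) (hTmm i)
    simpa [Kernel.comap_apply] using h1
  -- step 1 : pointwise bound on the Bayes error
  have step1 : ∀ x, bayesError P κ U x ≤
      ∑ i : Fin M, prior P U i x *
        ((if (i : ℕ) < M - 1 then fp i x else 0) + (if 0 < (i : ℕ) then fm i x else 0)) := by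
    intro x
    refine le_trans (iInf₂_le (φ x) (hφm x)) ?_
    refine Finset.sum_le_sum fun i _ => mul_le_mul_right ?_ _
    have hsub : {y | φ x y ≠ i} ⊆
        (if (i : ℕ) < M - 1 then Prod.mk x ⁻¹' Tp i else ∅) ∪
        (if 0 < (i : ℕ) then Prod.mk x ⁻¹' Tm i else ∅) := by
      intro y hy
      have hne : min (⌊(r y - c x) / u + 1/2⌋.toNat) (M - 1) ≠ (i : ℕ) := by
        intro hcontra
        exact hy (Fin.ext hcontra)
      rcases ZZ.decision_cases hM hu (r y - c x) i hne with ⟨h1, h2⟩ | ⟨h1, h2⟩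
      · left
        rw [if_pos h1]
        exact h2
      · right
        rw [if_pos h1]
        exact h2
    refine le_trans (measure_mono hsub) ?_
    refine le_trans (measure_union_le _ _) ?_
    gcongr <;> split_ifs <;> simp [hfp, hfm]
  -- integrate
  have hprob : ∀ i : Fin M, IsProbabilityMeasure (shiftLaw P (U i)) := fun i => ZZ.shift_prob P _
  haveI : IsFiniteMeasure (mixMeasure P U) := by
    constructor
    rw [mixMeasure, Measure.finset_sum_apply]
    have h1 : ∀ k : Fin M, shiftLaw P (U k) Set.univ = 1 := fun k => (hprob k).measure_univ
    simp [h1]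
  have hac : ∀ i : Fin M, shiftLaw P (U i) ≪ mixMeasure P U := by
    intro i
    refine Measure.AbsolutelyContinuous.mk fun s hs hs0 => ?_
    rw [mixMeasure, Measure.finset_sum_apply] at hs0
    have := (Finset.sum_eq_zero_iff.mp hs0) i (Finset.mem_univ i)
    exact this
  have hintm : ∀ i : Fin M, Measurable fun x =>
      (if (i : ℕ) < M - 1 then fp i x else 0) + (if 0 < (i : ℕ) then fm i x else 0) := by
    intro i
    refine Measurable.add ?_ ?_ <;> split_ifs <;>
      first | exact hfpm i | exact hfmm i | exact measurable_const
  have step2 : ∫⁻ x, bayesError P κ U x ∂(mixMeasure P U) ≤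
      ∑ i : Fin M, ∫⁻ x, ((if (i : ℕ) < M - 1 then fp i x else 0)
        + (if 0 < (i : ℕ) then fm i x else 0)) ∂(shiftLaw P (U i)) := by
    refine le_trans (lintegral_mono step1) ?_
    simp only [prior]
    rw [lintegral_finset_sum _ (f := fun i x => (shiftLaw P (U i)).rnDeriv (mixMeasure P U) x *
        ((if (i : ℕ) < M - 1 then fp i x else 0) + (if 0 < (i : ℕ) then fm i x else 0))) fun i _ =>
      (Measure.measurable_rnDeriv _ _).mul (hintm i)]
    refine le_of_eq (Finset.sum_congr rfl fun i _ => ?_)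
    haveI := hprob i
    haveI : (shiftLaw P (U i)).HaveLebesgueDecomposition (mixMeasure P U) :=
      Measure.haveLebesgueDecomposition_of_finiteMeasure
    exact lintegral_rnDeriv_mul (hac i) (hintm i).aemeasurable
  -- identify the integrals
  set Ep : Set ((Fin d → ℝ) × 𝒴) := {q | u / 2 ≤ r q.2 - c q.1} with hEpdef
  set Em : Set ((Fin d → ℝ) × 𝒴) := {q | r q.2 - c q.1 ≤ -(u / 2)} with hEmdef
  have hEpm : MeasurableSet Ep := measurableSet_le measurable_const hrc
  have hEmm : MeasurableSet Em := measurableSet_le hrc measurable_const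
  have hcsub : ∀ (z : Fin d → ℝ) (i : Fin M), c (z - U i) = c z - (i : ℝ) * u := by
    intro z i
    rw [hcdef]
    simp only [Pi.sub_apply, mul_sub, Finset.sum_sub_distrib]
    rw [hU i]
  have key_p : ∀ i : Fin M, ∫⁻ x, fp i x ∂(shiftLaw P (U i)) = ν Ep := by
    intro i
    rw [shiftLaw, lintegral_map (hfpm i) (measurable_id'.sub_const (U i))]
    have heq : ∀ z, fp i (z - U i) = κ z (Prod.mk z ⁻¹' Ep) := by
      intro z
      have hz : z - U i + U i = z := sub_add_cancel z (U i)
      rw [hfp]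
      simp only [hz]
      congr 1
      ext y
      simp only [Set.mem_preimage, Set.mem_setOf_eq, hTpdef, hEpdef, hcsub z i]
      constructor <;> intro h <;> linarith
    simp_rw [heq]
    rw [hν, Measure.compProd_apply hEpm]
  have key_m : ∀ i : Fin M, ∫⁻ x, fm i x ∂(shiftLaw P (U i)) = ν Em := by
    intro i
    rw [shiftLaw, lintegral_map (hfmm i) (measurable_id'.sub_const (U i))]
    have heq : ∀ z, fm i (z - U i) = κ z (Prod.mk z ⁻¹' Em) := by
      intro z
      have hz : z - U i + U i = z := sub_add_cancel z (U i)
      rw [hfm]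
      simp only [hz]
      congr 1
      ext y
      simp only [Set.mem_preimage, Set.mem_setOf_eq, hTmdef, hEmdef, hcsub z i]
      constructor <;> intro h <;> linarith
    simp_rw [heq]
    rw [hν, Measure.compProd_apply hEmm]
  -- sum up
  have step3 : ∑ i : Fin M, ∫⁻ x, ((if (i : ℕ) < M - 1 then fp i x else 0)
        + (if 0 < (i : ℕ) then fm i x else 0)) ∂(shiftLaw P (U i))
      = ((M - 1 : ℕ) : ℝ≥0∞) * (ν Ep + ν Em) := by
    have hsplit : ∀ i : Fin M, ∫⁻ x, ((if (i : ℕ) < M - 1 then fp i x else 0)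
        + (if 0 < (i : ℕ) then fm i x else 0)) ∂(shiftLaw P (U i))
        = (if (i : ℕ) < M - 1 then ν Ep else 0) + (if 0 < (i : ℕ) then ν Em else 0) := by
      intro i
      rw [lintegral_add_left (by split_ifs; exacts [hfpm i, measurable_const])]
      congr 1
      · split_ifs
        · exact key_p i
        · simp
      · split_ifs
        · exact key_m i
        · simp
    simp_rw [hsplit]
    rw [Finset.sum_add_distrib, ZZ.sum_ite_const, ZZ.sum_ite_const,
      ZZ.card_filter_lt hM, ZZ.card_filter_pos hM, mul_add]
  -- final set identification
  have hunion : Ep ∪ Em = {p | u ≤ 2 * |∑ j, a j * (g p.2 j - p.1 j)|} := by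
    ext p
    have hZ : (∑ j, a j * (g p.2 j - p.1 j)) = r p.2 - c p.1 := by
      simp only [hrdef, hcdef, mul_sub, Finset.sum_sub_distrib]
    simp only [Set.mem_union, Set.mem_setOf_eq, hEpdef, hEmdef, hZ]
    rcases le_or_gt 0 (r p.2 - c p.1) with h0 | h0
    · rw [abs_of_nonneg h0]
      constructor
      · rintro (h | h) <;> linarith
      · intro h; left; linarith
    · rw [abs_of_neg h0]
      constructor
      · rintro (h | h) <;> linarith
      · intro h; right; linarith
  have hdisj : Disjoint Ep Em := by
    rw [Set.disjoint_left]
    intro q hp hm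
    simp only [hEpdef, hEmdef, Set.mem_setOf_eq] at hp hm
    linarith
  have hsum : ν Ep + ν Em = ν {p | u ≤ 2 * |∑ j, a j * (g p.2 j - p.1 j)|} := by
    rw [← measure_union hdisj hEmm, hunion]
  have hcast : ((M - 1 : ℕ) : ℝ≥0∞) = (M : ℝ≥0∞) - 1 := by
    rw [ENNReal.natCast_sub]
    norm_num
  calc ∫⁻ x, bayesError P κ U x ∂(mixMeasure P U)
      ≤ ∑ i : Fin M, ∫⁻ x, ((if (i : ℕ) < M - 1 then fp i x else 0)
        + (if 0 < (i : ℕ) then fm i x else 0)) ∂(shiftLaw P (U i)) := step2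
    _ = ((M - 1 : ℕ) : ℝ≥0∞) * (ν Ep + ν Em) := step3
    _ = ((M : ℝ≥0∞) - 1) * ν {p | u ≤ 2 * |∑ j, a j * (g p.2 j - p.1 j)|} := by
        rw [hsum, hcast]

/-- **Ziv–Zakai bound for arbitrary estimators (Theorem 5 / Theorem `thm:BZZ_Mary_vec`).**
For any measurable estimator `g : 𝒴 → ℝ^d`, error `ε = g(Y) − X`, any `a ∈ ℝ^d` and any
integer `M ≥ 2`, `E[⟨a, ε⟩²] ≥ ∫_0^∞ (t/2) V_t{ h(t,a,M)/(M−1) } dt`, where the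
expectation is over the joint law `P ⊗ₘ κ` of `(X, Y)`. -/
theorem ziv_zakai_bound_estimator
    {d : ℕ} (hd : 1 ≤ d) {𝒴 : Type*} [MeasurableSpace 𝒴]
    (P : Measure (Fin d → ℝ)) [IsProbabilityMeasure P]
    (κ : Kernel (Fin d → ℝ) 𝒴) [IsMarkovKernel κ]
    (g : 𝒴 → Fin d → ℝ) (hg : Measurable g) (a : Fin d → ℝ) (M : ℕ) (hM : 2 ≤ M) :
    (∫⁻ t in Set.Ioi (0 : ℝ), ENNReal.ofReal (t / 2) *
        ⨆ (u : ℝ) (_ : t ≤ u), hFunA P κ M u a / ((M : ℝ≥0∞) - 1))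
      ≤ ∫⁻ p, ENNReal.ofReal ((∑ j, a j * (g p.2 j - p.1 j)) ^ 2) ∂(P.compProd κ) := by
  classical
  set ν := P.compProd κ with hν
  set Z : (Fin d → ℝ) × 𝒴 → ℝ := fun p => ∑ j, a j * (g p.2 j - p.1 j) with hZdef
  have hZ : Measurable Z := Finset.measurable_sum _ fun j _ =>
    (((measurable_pi_apply j).comp (hg.comp measurable_snd)).sub
      ((measurable_pi_apply j).comp measurable_fst)).const_mul (a j)
  set W : ℝ → ℝ≥0∞ := fun t => ν {p | t ≤ 2 * |Z p|} with hWdef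
  have hWanti : Antitone W := fun s t hst =>
    measure_mono fun p hp => le_trans hst hp
  have hsup : ∀ t ∈ Set.Ioi (0:ℝ),
      (⨆ (u : ℝ) (_ : t ≤ u), hFunA P κ M u a / ((M : ℝ≥0∞) - 1)) ≤ W t := by
    intro t ht
    refine iSup₂_le fun u htu => ?_
    have hu : (0:ℝ) < u := lt_of_lt_of_le ht htu
    refine ENNReal.div_le_of_le_mul ?_
    rw [hFunA]
    refine iSup₂_le fun U hU => ?_
    calc ∫⁻ x, bayesError P κ U x ∂(mixMeasure P U)
        ≤ ((M : ℝ≥0∞) - 1) * ν {p | u ≤ 2 * |Z p|} := ZZ.core_bound P κ hg a hM hu U hU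
      _ ≤ ((M : ℝ≥0∞) - 1) * W t := by
          gcongr
          exact measure_mono fun p hp => le_trans htu hp
      _ = W t * ((M : ℝ≥0∞) - 1) := mul_comm _ _
  calc ∫⁻ t in Set.Ioi (0 : ℝ), ENNReal.ofReal (t / 2) *
        ⨆ (u : ℝ) (_ : t ≤ u), hFunA P κ M u a / ((M : ℝ≥0∞) - 1)
      ≤ ∫⁻ t in Set.Ioi (0 : ℝ), ENNReal.ofReal (t / 2) * W t := by
        refine setLIntegral_mono ((measurable_id.div_const 2).ennreal_ofReal.mul
          hWanti.measurable) fun t ht => ?_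
        exact mul_le_mul_right (hsup t ht) _
    _ = ∫⁻ p, ENNReal.ofReal (Z p ^ 2) ∂ν := ZZ.layercake ν hZ
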